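/- Let V₁ and V₂ be linear subspaces of ℝ^d with V₁ ⊕ V₂ = ℝ^d, such that π(V₁) and π(V₂) are both dense in T^d (so the linear foliations 𝓛_{V₁} and 𝓛_{V₂} are transverse, of complementary dimensions, and minimal). Let H: T^d → T^d be a homeomorphism that is homotopic to the identity and preserves both linear foliations, i.e. H(x + π(V₁)) = H(x) + π(V₁) and H(x + π(V₂)) = H(x) + π(V₂) as subsets of T^d, for every x ∈ T^d. Then H is a translation: there exists v ∈ T^d such that H(x) = x + v for all x ∈ T^d. -/

import Mathlib

open MeasureTheory

noncomputable section

/-- The projection `π : ℝ^d → T^d = ℝ^d/ℤ^d`, realized coordinatewise. -/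
def torusProj (d : ℕ) (x : Fin d → ℝ) : Fin d → UnitAddCircle :=
  fun i => (x i : UnitAddCircle)

lemma torusProj_add (d : ℕ) (a b : Fin d → ℝ) :
    torusProj d (a + b) = torusProj d a + torusProj d b := rfl

lemma torusProj_eq_iff {d : ℕ} {a b : Fin d → ℝ} (h : torusProj d a = torusProj d b) :
    ∃ n : Fin d → ℤ, b = a + fun i => (n i : ℝ) := by
  have key : ∀ i, ∃ n : ℤ, b i = a i + n := by
    intro i
    have hi : (a i : UnitAddCircle) = (b i : UnitAddCircle) := congrFun h i
    rw [QuotientAddGroup.eq_iff_sub_mem] at hi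
    obtain ⟨n, hn⟩ := AddSubgroup.mem_zmultiples_iff.mp hi
    exact ⟨-n, by push_cast; simp only [zsmul_eq_mul, mul_one] at hn; linarith⟩
  choose n hn using key
  exact ⟨n, funext fun i => by simpa using hn i⟩

lemma torusProj_continuous (d : ℕ) : Continuous (torusProj d) :=
  continuous_pi fun i => continuous_quotient_mk'.comp (continuous_apply i)

lemma torusProj_isOpenMap (d : ℕ) : IsOpenMap (torusProj d) :=
  IsOpenMap.piMap (fun _ => QuotientAddGroup.isOpenMap_coe)
    (Filter.Eventually.of_forall fun _ => QuotientAddGroup.mk_surjective)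

lemma torusProj_surjective (d : ℕ) : Function.Surjective (torusProj d) := by
  intro y
  have : ∀ i, ∃ r : ℝ, (r : UnitAddCircle) = y i := fun i => QuotientAddGroup.mk_surjective (y i)
  choose r hr using this
  exact ⟨r, funext hr⟩

lemma countable_preconnected_real {s : Set ℝ} (hs : IsPreconnected s) (hc : s.Countable) :
    s.Subsingleton := by
  intro a ha b hb
  by_contra hne
  rcases lt_or_gt_of_ne hne with hlt | hlt
  · have hsub := hs.Icc_subset ha hb
    have hcc : (Set.Icc a b).Countable := hc.mono hsub
    have h1 : (Cardinal.mk (Set.Icc a b)) = Cardinal.continuum := Cardinal.mk_Icc_real hlt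
    have h2 := hcc.le_aleph0
    rw [h1] at h2
    exact absurd h2 (not_le.mpr Cardinal.aleph0_lt_continuum)
  · have hsub := hs.Icc_subset hb ha
    have hcc : (Set.Icc b a).Countable := hc.mono hsub
    have h1 : (Cardinal.mk (Set.Icc b a)) = Cardinal.continuum := Cardinal.mk_Icc_real hlt
    have h2 := hcc.le_aleph0
    rw [h1] at h2
    exact absurd h2 (not_le.mpr Cardinal.aleph0_lt_continuum)

/-- Key lemma: the projection (along V) of the displacement of the lift is constant. -/
lemma key_const (d : ℕ) (V W : Submodule ℝ (Fin d → ℝ)) (h : IsCompl V W)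
    (hdense : Dense (torusProj d '' (V : Set (Fin d → ℝ))))
    (H : (Fin d → UnitAddCircle) ≃ₜ (Fin d → UnitAddCircle))
    (Ht : (Fin d → ℝ) → (Fin d → ℝ)) (hHt_cont : Continuous Ht)
    (hHt_proj : ∀ x : Fin d → ℝ, H (torusProj d x) = torusProj d (Ht x))
    (hHt_per : ∀ (x : Fin d → ℝ) (n : Fin d → ℤ),
      Ht (x + fun i => (n i : ℝ)) = Ht x + fun i => (n i : ℝ))
    (hleaf : ∀ x : Fin d → UnitAddCircle,
      (⇑H) '' ((fun v => x + torusProj d v) '' (V : Set (Fin d → ℝ))) =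
        (fun v => H x + torusProj d v) '' (V : Set (Fin d → ℝ))) :
    ∀ x : Fin d → ℝ,
      W.linearProjOfIsCompl V h.symm (Ht x - x) = W.linearProjOfIsCompl V h.symm (Ht 0) := by
  set P := W.linearProjOfIsCompl V h.symm with hP
  -- Step A: for v ∈ V, Ht (x+v) = Ht x + v' + n with v' ∈ V, n integer
  have hA : ∀ (x v : Fin d → ℝ), v ∈ V → ∃ v' ∈ V, ∃ n : Fin d → ℤ,
      Ht (x + v) = (Ht x + v') + fun i => (n i : ℝ) := by
    intro x v hv
    have hmem : H (torusProj d x + torusProj d v) ∈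
        (fun u => H (torusProj d x) + torusProj d u) '' (V : Set (Fin d → ℝ)) := by
      rw [← hleaf (torusProj d x)]
      exact ⟨torusProj d x + torusProj d v, ⟨v, hv, rfl⟩, rfl⟩
    obtain ⟨v', hv', hveq⟩ := hmem
    have hproj : torusProj d (Ht x + v') = torusProj d (Ht (x + v)) := by
      rw [torusProj_add, ← hHt_proj x, ← hHt_proj (x + v), torusProj_add]
      exact hveq
    obtain ⟨n, hn⟩ := torusProj_eq_iff hproj
    exact ⟨v', hv', n, hn⟩
  -- Step B: for v ∈ V, Ht (x+v) - Ht x ∈ V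
  have hPcont : Continuous fun y : Fin d → ℝ => (P y : Fin d → ℝ) :=
    (continuous_subtype_val).comp P.continuous_of_finiteDimensional
  have hB : ∀ (x v : Fin d → ℝ), v ∈ V → Ht (x + v) - Ht x ∈ V := by
    intro x v hv
    -- the continuous function v ↦ P (Ht (x+v) - Ht x) takes countably many values on V
    set f : (Fin d → ℝ) → (Fin d → ℝ) := fun u => (P (Ht (x + u) - Ht x) : Fin d → ℝ) with hf
    have hfcont : Continuous f := hPcont.comp ((hHt_cont.comp (by continuity)).sub continuous_const)
    have hS : ∀ u ∈ (V : Set (Fin d → ℝ)), f u ∈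
        Set.range (fun n : Fin d → ℤ => ((P fun i => (n i : ℝ)) : Fin d → ℝ)) := by
      intro u hu
      obtain ⟨v', hv', n, hn⟩ := hA x u hu
      refine ⟨n, ?_⟩
      have : Ht (x + u) - Ht x = (v' + fun i => (n i : ℝ)) := by
        rw [hn]; abel
      rw [hf]
      simp only [this, map_add, (show P v' = 0 from Submodule.linearProjOfIsCompl_apply_right' h.symm hv'),
        zero_add]
    have hcount : (Set.range (fun n : Fin d → ℤ =>
        ((P fun i => (n i : ℝ)) : Fin d → ℝ))).Countable := Set.countable_range _
    -- f is 0 on V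
    have hf0 : ∀ u ∈ (V : Set (Fin d → ℝ)), f u = 0 := by
      intro u hu
      funext i
      have hpre : IsPreconnected ((fun y : Fin d → ℝ => y i) '' (f '' (V : Set (Fin d → ℝ)))) :=
        ((V.convex.isPreconnected).image f hfcont.continuousOn).image _
          (continuous_apply i).continuousOn
      have hcnt : ((fun y : Fin d → ℝ => y i) '' (f '' (V : Set (Fin d → ℝ)))).Countable :=
        ((hcount.image fun y : Fin d → ℝ => y i)).mono
          (by rintro _ ⟨y, ⟨u, hu, rfl⟩, rfl⟩; exact ⟨f u, hS u hu, rfl⟩)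
      have hsub := countable_preconnected_real hpre hcnt
      have h0mem : f 0 i ∈ (fun y : Fin d → ℝ => y i) '' (f '' (V : Set (Fin d → ℝ))) :=
        ⟨f 0, ⟨0, V.zero_mem, rfl⟩, rfl⟩
      have humem : f u i ∈ (fun y : Fin d → ℝ => y i) '' (f '' (V : Set (Fin d → ℝ))) :=
        ⟨f u, ⟨u, hu, rfl⟩, rfl⟩
      have : f u i = f 0 i := hsub humem h0mem
      rw [this, hf]
      simp
    have : P (Ht (x + v) - Ht x) = 0 := by
      have := hf0 v hv
      rw [hf] at this
      exact_mod_cast Subtype.coe_injective (by simpa using this)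
    exact (Submodule.linearProjOfIsCompl_apply_eq_zero_iff h.symm).mp this
  -- Step C: density of V + ℤ^d
  have hD : Dense (torusProj d ⁻¹' (torusProj d '' (V : Set (Fin d → ℝ)))) :=
    hdense.preimage (torusProj_isOpenMap d)
  -- Step D: φ := P (Ht y - y) is continuous and constant on the dense set
  set φ : (Fin d → ℝ) → (Fin d → ℝ) := fun y => (P (Ht y - y) : Fin d → ℝ) with hφ
  have hφcont : Continuous φ := hPcont.comp (hHt_cont.sub continuous_id)
  have hφconst : Set.EqOn φ (fun _ => φ 0)
      (torusProj d ⁻¹' (torusProj d '' (V : Set (Fin d → ℝ)))) := by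
    intro y hy
    obtain ⟨v, hv, hvy⟩ := hy
    obtain ⟨n, hn⟩ := torusProj_eq_iff hvy
    have h1 : φ y = φ v := by
      rw [hn, hφ]
      simp only [hHt_per v n]
      congr 2
      abel
    have h2 : φ v = φ 0 := by
      have hmem : Ht v - v - (Ht 0 - 0) ∈ V := by
        have := hB 0 v hv
        rw [zero_add] at this
        have h3 : Ht v - v - (Ht 0 - 0) = (Ht v - Ht 0) - v := by abel
        rw [h3]
        exact V.sub_mem this hv
      have : P (Ht v - v - (Ht 0 - 0)) = 0 :=
        (Submodule.linearProjOfIsCompl_apply_eq_zero_iff h.symm).mpr hmem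
      rw [map_sub, sub_eq_zero] at this
      show ((P (Ht v - v) : Fin d → ℝ)) = ((P (Ht (0:Fin d → ℝ) - 0) : Fin d → ℝ))
      exact congrArg Subtype.val this
    rw [h1, h2]
  have : φ = fun _ => φ 0 := Continuous.ext_on hD hφcont continuous_const hφconst
  intro x
  have hx := congrFun this x
  simp only [hφ] at hx
  apply Subtype.coe_injective
  have h0 : (0 : Fin d → ℝ) - 0 = 0 := by simp
  calc (P (Ht x - x) : Fin d → ℝ) = (P (Ht 0 - 0) : Fin d → ℝ) := hx
    _ = (P (Ht 0) : Fin d → ℝ) := by rw [sub_zero]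


/-- Let `V₁ ⊕ V₂ = ℝ^d` be complementary subspaces whose projections
to the torus are dense (so the linear foliations `𝓛_{V₁}`, `𝓛_{V₂}` are transverse,
of complementary dimensions, and minimal). Any homeomorphism of `T^d` homotopic to
the identity (i.e. admitting a lift commuting with integer translations) that
preserves both linear foliations is a translation. -/
theorem homeo_preserving_two_minimal_linear_foliations_is_translation
    (d : ℕ) (V₁ V₂ : Submodule ℝ (Fin d → ℝ)) (hcompl : IsCompl V₁ V₂)
    (hdense₁ : Dense (torusProj d '' (V₁ : Set (Fin d → ℝ))))
    (hdense₂ : Dense (torusProj d '' (V₂ : Set (Fin d → ℝ))))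
    (H : (Fin d → UnitAddCircle) ≃ₜ (Fin d → UnitAddCircle))
    -- `H` is homotopic to the identity: it admits a continuous lift `Ht` with
    -- `Ht (x̃ + n) = Ht x̃ + n` for all integer vectors `n`
    (Ht : (Fin d → ℝ) → (Fin d → ℝ)) (hHt_cont : Continuous Ht)
    (hHt_proj : ∀ x : Fin d → ℝ, H (torusProj d x) = torusProj d (Ht x))
    (hHt_per : ∀ (x : Fin d → ℝ) (n : Fin d → ℤ),
      Ht (x + fun i => (n i : ℝ)) = Ht x + fun i => (n i : ℝ))
    -- `H` preserves both linear foliations: `H(x + π(Vⱼ)) = H(x) + π(Vⱼ)`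
    (hleaf₁ : ∀ x : Fin d → UnitAddCircle,
      (⇑H) '' ((fun v => x + torusProj d v) '' (V₁ : Set (Fin d → ℝ))) =
        (fun v => H x + torusProj d v) '' (V₁ : Set (Fin d → ℝ)))
    (hleaf₂ : ∀ x : Fin d → UnitAddCircle,
      (⇑H) '' ((fun v => x + torusProj d v) '' (V₂ : Set (Fin d → ℝ))) =
        (fun v => H x + torusProj d v) '' (V₂ : Set (Fin d → ℝ))) :
    ∃ v : Fin d → UnitAddCircle, ∀ x, H x = x + v := by
  have k₂ := key_const d V₁ V₂ hcompl hdense₁ H Ht hHt_cont hHt_proj hHt_per hleaf₁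
  have k₁ := key_const d V₂ V₁ hcompl.symm hdense₂ H Ht hHt_cont hHt_proj hHt_per hleaf₂
  have hconst : ∀ x : Fin d → ℝ, Ht x - x = Ht 0 := by
    intro x
    have hsum := Submodule.projection_add_projection_eq_self hcompl.symm (Ht x - x)
    have hsum0 := Submodule.projection_add_projection_eq_self hcompl.symm (Ht 0)
    rw [Submodule.projection_apply, Submodule.projection_apply] at hsum hsum0
    rw [← hsum0]
    rw [← hsum]
    exact congrArg₂ (· + ·) (congrArg Subtype.val (k₂ x)) (congrArg Subtype.val (k₁ x))
  refine ⟨torusProj d (Ht 0), fun x => ?_⟩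
  obtain ⟨y, rfl⟩ := torusProj_surjective d x
  rw [hHt_proj y]
  have : Ht y = y + Ht 0 := by have := hconst y; linear_combination (norm := abel) this
  rw [this, torusProj_add]


end
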